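/- Let \phi(x_1,x_2,x_3) = \frac{(1-x_1)(1-x_2)(1-x_3)(1 - x_1 - x_2 + x_1 x_2 - x_1 x_2 x_3)}{-\,x_1 x_2 x_3}, a Laurent polynomial in three variables. Then for every k \ge 0, the constant term of \phi^k (the coefficient of x_1^0 x_2^0 x_3^0 in the Laurent expansion of \phi(x)^k) equals the Apéry number \sum_{\ell=0}^{k} \binom{k}{\ell}^2 \binom{k+\ell}{\ell}^2. -/

import Mathlib

/-- The `i`-th coordinate variable `xᵢ`, as an element of the ring of Laurent polynomials in
three variables (the group algebra of `ℤ³` over `ℂ`). -/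
noncomputable def X3 (i : Fin 3) : AddMonoidAlgebra ℂ (Fin 3 → ℤ) :=
  AddMonoidAlgebra.single (Pi.single i 1) 1

open Finset


abbrev R3 := AddMonoidAlgebra ℂ (Fin 3 → ℤ)

lemma one_sub_single_pow (v : Fin 3 → ℤ) (n : ℕ) :
    ((1 : R3) - AddMonoidAlgebra.single v 1) ^ n
      = ∑ p ∈ range (n+1),
          AddMonoidAlgebra.single (p • v) ((-1)^p * (n.choose p : ℂ)) := by
  rw [sub_eq_add_neg, add_comm, add_pow]
  refine Finset.sum_congr rfl fun p hp => ?_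
  rw [show -(AddMonoidAlgebra.single v (1:ℂ)) = AddMonoidAlgebra.single v (-1) from
      (AddMonoidAlgebra.single_neg v 1).symm,
    AddMonoidAlgebra.single_pow, one_pow, mul_one, AddMonoidAlgebra.natCast_def,
    AddMonoidAlgebra.single_mul_single, add_zero]

/-- The Minkowski Laurent polynomial
`φ = (1-x₁)(1-x₂)(1-x₃)(1-x₁-x₂+x₁x₂-x₁x₂x₃) / (-x₁x₂x₃)`
of the Landau–Ginzburg model mirror to the Fano threefold `V₁₂`. -/
noncomputable def phiV12 : AddMonoidAlgebra ℂ (Fin 3 → ℤ) :=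
  AddMonoidAlgebra.single (fun _ => (-1 : ℤ)) (-1 : ℂ) *
    ((1 - X3 0) * (1 - X3 1) * (1 - X3 2) *
      (1 - X3 0 - X3 1 + X3 0 * X3 1 - X3 0 * X3 1 * X3 2))

noncomputable def S (v : Fin 3 → ℤ) (c : ℂ) : R3 := AddMonoidAlgebra.single v c

lemma S_mul (v w : Fin 3 → ℤ) (c d : ℂ) : S v c * S w d = S (v + w) (c * d) :=
  AddMonoidAlgebra.single_mul_single _ _ _ _

lemma S_pow (v : Fin 3 → ℤ) (c : ℂ) (n : ℕ) : S v c ^ n = S (n • v) (c ^ n) :=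
  AddMonoidAlgebra.single_pow _ _ n

lemma prod_X3 : X3 0 * X3 1 * X3 2 = S (fun _ => (1:ℤ)) 1 := by
  rw [show X3 0 * X3 1 * X3 2 = S (Pi.single 0 1) 1 * S (Pi.single 1 1) 1 * S (Pi.single 2 1) 1
      from rfl, S_mul, S_mul, one_mul, mul_one]
  congr 1
  funext i; fin_cases i <;> simp

lemma phi_pow (k : ℕ) :
    phiV12 ^ k = ∑ j ∈ range (k+1),
      S (fun _ => -(j:ℤ)) ((-1:ℂ)^j * (k.choose j : ℂ)) *
        ((1 - X3 0)^(k+j) * (1 - X3 1)^(k+j) * (1 - X3 2)^k) := by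
  have hphi : phiV12 =
      S (fun _ => (-1 : ℤ)) (-1 : ℂ) *
        ((1 - X3 0) * (1 - X3 1) * (1 - X3 2) *
          ((1 - X3 0) * (1 - X3 1) + -(S (fun _ => (1:ℤ)) (1:ℂ)))) := by
    rw [phiV12, ← prod_X3]; rw [show AddMonoidAlgebra.single (fun _ => (-1 : ℤ)) (-1 : ℂ)
      = S (fun _ => (-1 : ℤ)) (-1 : ℂ) from rfl]; ring
  rw [hphi, mul_pow, mul_pow, add_pow, Finset.mul_sum, Finset.mul_sum]
  refine Finset.sum_congr rfl fun j hj => ?_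
  simp only [Finset.mem_range] at hj
  obtain ⟨d, rfl⟩ : ∃ d, k = j + d := ⟨k - j, by omega⟩
  have h1 : (S (fun _ => (-1:ℤ)) (-1:ℂ)) ^ (j+d)
      = S (fun _ => -((j:ℤ)+(d:ℤ))) ((-1:ℂ)^(j+d)) := by
    rw [S_pow]; congr 1; funext i; simp
  have h2 : (-(S (fun _ => (1:ℤ)) (1:ℂ))) ^ ((j+d) - j)
      = S (fun _ => (d:ℤ)) ((-1:ℂ)^d) := by
    rw [Nat.add_sub_cancel_left,
      show -(S (fun _ => (1:ℤ)) (1:ℂ)) = S (fun _ => (1:ℤ)) (-1:ℂ) from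
        (AddMonoidAlgebra.single_neg (fun _ => (1:ℤ)) (1:ℂ)).symm,
      S_pow]
    congr 1; funext i; simp
  have hcast : (((j+d).choose j : ℕ) : R3) = S 0 (((j+d).choose j : ℂ)) :=
    AddMonoidAlgebra.natCast_def _
  have hs : S (fun _ => -((j:ℤ)+(d:ℤ))) ((-1:ℂ)^(j+d)) * S (fun _ => (d:ℤ)) ((-1:ℂ)^d) *
      S 0 (((j+d).choose j : ℂ)) =
      S (fun _ => -(j:ℤ)) ((-1:ℂ)^j * ((j+d).choose j : ℂ)) := by
    rw [S_mul, S_mul]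
    congr 1
    · funext i; simp [Pi.add_apply]
    · have hdd : ((-1:ℂ))^d * (-1:ℂ)^d = 1 := by
        rw [← pow_add, ← two_mul, pow_mul]; norm_num
      rw [pow_add, mul_assoc ((-1:ℂ)^j), hdd, mul_one]
  calc S (fun _ => (-1:ℤ)) (-1:ℂ) ^ (j+d) *
        (((1 - X3 0) * (1 - X3 1) * (1 - X3 2)) ^ (j+d) *
          (((1 - X3 0) * (1 - X3 1)) ^ j * (-(S (fun _ => (1:ℤ)) (1:ℂ))) ^ ((j+d) - j) *
            ((j+d).choose j : R3)))
      = (S (fun _ => -((j:ℤ)+(d:ℤ))) ((-1:ℂ)^(j+d)) * S (fun _ => (d:ℤ)) ((-1:ℂ)^d) *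
          S 0 (((j+d).choose j : ℂ))) *
        (((1 - X3 0)^(j+d) * (1 - X3 0)^j) * ((1 - X3 1)^(j+d) * (1 - X3 1)^j) *
          (1 - X3 2)^(j+d)) := by rw [h1, h2, hcast, mul_pow, mul_pow, mul_pow]; ring
    _ = S (fun _ => -(j:ℤ)) ((-1:ℂ)^j * ((j+d).choose j : ℂ)) *
        ((1 - X3 0)^((j+d)+j) * (1 - X3 1)^((j+d)+j) * (1 - X3 2)^(j+d)) := by
        rw [hs, pow_add, pow_add]; ring

lemma term_eval (j a b : ℕ) (hja : j ≤ a) (hjb : j ≤ b) (c : ℂ) :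
    ((S (fun _ => -(j:ℤ)) c *
      ((1 - X3 0)^a * (1 - X3 1)^a * (1 - X3 2)^b)) : R3).coeff 0
    = c * (((-1:ℂ)^j * (a.choose j : ℂ)) * ((-1:ℂ)^j * (a.choose j : ℂ)) *
        ((-1:ℂ)^j * (b.choose j : ℂ))) := by
  rw [X3, X3, X3, one_sub_single_pow, one_sub_single_pow, one_sub_single_pow]
  have hsum : ∀ (s : Finset ℕ) (F : ℕ → R3), (∑ i ∈ s, F i).coeff 0 = ∑ i ∈ s, (F i).coeff 0 :=
    fun s F => by rw [AddMonoidAlgebra.coeff_sum, Finsupp.finset_sum_apply]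
  have hsing : ∀ (v : Fin 3 → ℤ) (c : ℂ), (AddMonoidAlgebra.single v c : R3).coeff 0
      = if v = 0 then c else 0 := by
    classical
    intro v c
    rw [AddMonoidAlgebra.coeff_single, Finsupp.single_apply]
  have vec_eq : ∀ p q r : ℕ, ((fun _ => -(j:ℤ)) +
      (p • Pi.single 0 1 + q • Pi.single 1 1 + r • Pi.single 2 1) = (0 : Fin 3 → ℤ))
      ↔ (p = j ∧ q = j ∧ r = j) := by
    intro p q r
    constructor
    · intro h
      have h0 := congrFun h 0
      have h1 := congrFun h 1
      have h2 := congrFun h 2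
      simp [Pi.single_apply] at h0 h1 h2
      omega
    · rintro ⟨rfl, rfl, rfl⟩
      funext i; fin_cases i <;> simp
  simp only [Finset.mul_sum, Finset.sum_mul, S, AddMonoidAlgebra.single_mul_single,
    hsum, hsing, vec_eq, ite_and, Finset.sum_ite_eq', Finset.mem_range]
  have h1 : j < a + 1 := by omega
  have h2 : j < b + 1 := by omega
  simp [h1, h2]

/-- The constant term of `φ^k` equals the Apéry number
`∑_{ℓ=0}^k (k choose ℓ)² ((k+ℓ) choose ℓ)²`. -/
theorem constant_term_phiV12_eq_apery (k : ℕ) :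
    (phiV12 ^ k).coeff 0 =
      ∑ l ∈ Finset.range (k + 1),
        ((k.choose l : ℂ)) ^ 2 * (((k + l).choose l : ℂ)) ^ 2 := by
  rw [phi_pow, AddMonoidAlgebra.coeff_sum, Finsupp.finset_sum_apply]
  refine Finset.sum_congr rfl fun j hj => ?_
  simp only [Finset.mem_range] at hj
  rw [term_eval j (k+j) k (by omega) (by omega)]
  have hs : ((-1:ℂ))^j * ((-1:ℂ))^j = 1 := by
    rw [← pow_add, ← two_mul, pow_mul]; norm_num
  calc ((-1:ℂ)^j * (k.choose j : ℂ)) *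
        (((-1:ℂ)^j * ((k+j).choose j : ℂ)) * ((-1:ℂ)^j * ((k+j).choose j : ℂ)) *
          ((-1:ℂ)^j * (k.choose j : ℂ)))
      = (((-1:ℂ)^j * (-1:ℂ)^j) * ((-1:ℂ)^j * (-1:ℂ)^j)) *
        ((k.choose j : ℂ)^2 * (((k+j).choose j : ℂ))^2) := by ring
    _ = (k.choose j : ℂ)^2 * (((k+j).choose j : ℂ))^2 := by rw [hs]; ring
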